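/- Let I ⊂ S be a monomial ideal with G(I) = {u_1,...,u_{m−1}, ū_m x_j^t} where x_j is a free variable of I (x_j divides only the last generator) and x_j does not divide ū_m. If both minors I_{(∅,{x_j})} = (u_1,...,u_{m−1}, ū_m) and I_{({x_j},∅)} = (u_1,...,u_{m−1}) define pretty clean quotient rings, then S/I is pretty clean. -/

import Mathlib

attribute [local instance] Classical.propDecidable

abbrev Mon (n : ℕ) := Fin n →₀ ℕ

def mdeg {n : ℕ} (u : Mon n) : ℕ := u.sum fun _ e => e

/-- `mcolon u v` is the exponent vector of `u : v = u / gcd(u,v)`. -/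
noncomputable def mcolon {n : ℕ} (u v : Mon n) : Mon n := u - v

def IsAdmissible {n : ℕ} (L : List (Mon n)) : Prop :=
  ∀ i (hi : i < L.length), ∀ j (hj : j < i), ∃ k, ∃ hk : k < i,
    mdeg (mcolon (L[k]'(hk.trans hi)) (L[i]'hi)) = 1 ∧
    mcolon (L[k]'(hk.trans hi)) (L[i]'hi) ≤
      mcolon (L[j]'(hj.trans hi)) (L[i]'hi)

def LinearQuotientsSet {n : ℕ} (T : Set (Mon n)) : Prop :=
  ∃ L : List (Mon n), L.Nodup ∧ IsAdmissible L ∧ {u | u ∈ L} = T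

def LinearQuotients {n : ℕ} (G : Finset (Mon n)) : Prop :=
  LinearQuotientsSet (↑G : Set (Mon n))

/-- The monomial ideal of `MvPolynomial (Fin n) K` generated by the monomials with
exponent vectors in `G`. -/
noncomputable def idealOf {n : ℕ} (K : Type*) [Field K] (G : Set (Mon n)) :
    Ideal (MvPolynomial (Fin n) K) :=
  Ideal.span ((fun u => MvPolynomial.monomial u (1 : K)) '' G)

/-- An ideal of the polynomial ring is a monomial ideal if it is generated by
monomials. -/
def IsMonomialIdeal {n : ℕ} {K : Type*} [Field K]
    (I : Ideal (MvPolynomial (Fin n) K)) : Prop :=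
  ∃ G : Set (Mon n), I = idealOf K G

/-- A monomial prime ideal of the polynomial ring: an ideal generated by a subset of
the variables. -/
def IsVarIdeal {n : ℕ} {K : Type*} [Field K]
    (P : Ideal (MvPolynomial (Fin n) K)) : Prop :=
  ∃ s : Set (Fin n), P = Ideal.span (MvPolynomial.X '' s)

/-- `S/I` is pretty clean: there is a filtration `I = I_0 ⊆ I_1 ⊆ ⋯ ⊆ I_r = S` by
monomial ideals with `I_j/I_{j-1} ≅ S/P_j` for monomial prime ideals `P_j`, such that
`i < j` and `P_i ⊆ P_j` imply `P_i = P_j`. -/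
def PrettyClean {n : ℕ} {K : Type*} [Field K]
    (I : Ideal (MvPolynomial (Fin n) K)) : Prop :=
  ∃ (r : ℕ) (c : Fin (r + 1) → Ideal (MvPolynomial (Fin n) K))
    (P : Fin r → Ideal (MvPolynomial (Fin n) K)),
    c 0 = I ∧ c (Fin.last r) = ⊤ ∧
    (∀ j : Fin (r + 1), IsMonomialIdeal (c j)) ∧
    (∀ j : Fin r, c j.castSucc ≤ c j.succ) ∧
    (∀ j : Fin r, (P j).IsPrime ∧ IsVarIdeal (P j)) ∧
    (∀ j : Fin r, Nonempty
      ((↥(c j.succ) ⧸ Submodule.comap (c j.succ).subtype (c j.castSucc)) ≃ₗ[MvPolynomial (Fin n) K]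
        (MvPolynomial (Fin n) K ⧸ P j))) ∧
    (∀ i j : Fin r, i < j → P i ≤ P j → P i = P j)

namespace PC

variable {n : ℕ} {K : Type*} [Field K]

noncomputable def mono (K : Type*) [Field K] (u : Mon n) : MvPolynomial (Fin n) K :=
  MvPolynomial.monomial u 1

theorem mem_idealOf {p : MvPolynomial (Fin n) K} {G : Set (Mon n)} :
    p ∈ idealOf K G ↔ ∀ μ ∈ p.support, ∃ g ∈ G, g ≤ μ :=
  MvPolynomial.mem_ideal_span_monomial_image

theorem mono_mem {μ : Mon n} {G : Set (Mon n)} :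
    mono K μ ∈ idealOf K G ↔ ∃ g ∈ G, g ≤ μ := by
  rw [mono, mem_idealOf]
  simp [MvPolynomial.support_monomial]

theorem support_mul_mono (f : MvPolynomial (Fin n) K) (v : Mon n) :
    (f * mono K v).support = f.support.map (addRightEmbedding v) :=
  AddMonoidAlgebra.support_coeff_mul_single f 1 (by simp) v

theorem mul_mono_mem {f : MvPolynomial (Fin n) K} {v : Mon n} {G : Set (Mon n)} :
    f * mono K v ∈ idealOf K G ↔ ∀ μ ∈ f.support, ∃ g ∈ G, g ≤ μ + v := by
  rw [mem_idealOf]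
  constructor
  · intro h μ hμ
    exact h (μ + v) (by rw [support_mul_mono]; exact Finset.mem_map_of_mem _ hμ)
  · intro h μ hμ
    rw [support_mul_mono, Finset.mem_map] at hμ
    obtain ⟨ν, hν, rfl⟩ := hμ
    exact h ν hν

theorem idealOf_mono_set {G G' : Set (Mon n)} (h : G ⊆ G') : idealOf K G ≤ idealOf K G' :=
  Ideal.span_mono (Set.image_mono h)

theorem idealOf_insert {v : Mon n} {G : Set (Mon n)} :
    idealOf K (insert v G) = idealOf K G ⊔ Ideal.span {mono K v} := by
  rw [idealOf, Set.image_insert_eq, Ideal.span_insert, sup_comm]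
  rfl

theorem idealOf_eq_top_iff {G : Set (Mon n)} :
    idealOf K G = ⊤ ↔ (0 : Mon n) ∈ G := by
  constructor
  · intro h
    have h1 : (1 : MvPolynomial (Fin n) K) ∈ idealOf K G := h ▸ trivial
    rw [show (1 : MvPolynomial (Fin n) K) = mono K 0 by simp [mono], mono_mem] at h1
    obtain ⟨g, hg, hle⟩ := h1
    have : g = 0 := le_antisymm hle zero_le
    exact this ▸ hg
  · intro h
    rw [Ideal.eq_top_iff_one, show (1 : MvPolynomial (Fin n) K) = mono K 0 by simp [mono],
      mono_mem]
    exact ⟨0, h, le_refl _⟩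

/-- variable ideal -/
noncomputable def vi (K : Type*) [Field K] {n : ℕ} (s : Set (Fin n)) :
    Ideal (MvPolynomial (Fin n) K) :=
  Ideal.span (MvPolynomial.X '' s)

theorem mem_vi {p : MvPolynomial (Fin n) K} {s : Set (Fin n)} :
    p ∈ vi K s ↔ ∀ μ ∈ p.support, ∃ i ∈ s, (μ : Mon n) i ≠ 0 :=
  MvPolynomial.mem_ideal_span_X_image

theorem mono_mem_vi {μ : Mon n} {s : Set (Fin n)} :
    mono K μ ∈ vi K s ↔ ∃ i ∈ s, μ i ≠ 0 := by
  rw [mono, mem_vi]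
  simp [MvPolynomial.support_monomial]

theorem vi_subset_iff {s s' : Set (Fin n)} : vi K s ≤ vi K s' ↔ s ⊆ s' := by
  constructor
  · intro h i hi
    have : MvPolynomial.X i ∈ vi K s' := h (Ideal.subset_span ⟨i, hi, rfl⟩)
    rw [MvPolynomial.X, show MvPolynomial.monomial (Finsupp.single i 1) (1:K) =
      mono K (Finsupp.single i 1) from rfl, mono_mem_vi] at this
    obtain ⟨i', hi', hne⟩ := this
    rw [Finsupp.single_apply] at hne
    split_ifs at hne with hii
    · exact hii ▸ hi'
    · exact absurd rfl hne
  · intro h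
    exact Ideal.span_mono (Set.image_mono h)

theorem sub_aeval_mem_vi (s : Set (Fin n)) (p : MvPolynomial (Fin n) K) :
    p - MvPolynomial.aeval (fun i => if i ∈ s then 0 else MvPolynomial.X i) p ∈ vi K s := by
  induction p using MvPolynomial.induction_on with
  | C a => simp
  | add p q hp hq =>
      have := Submodule.add_mem _ hp hq
      convert this using 1
      simp only [map_add]
      ring
  | mul_X p i hp =>
      rw [map_mul, MvPolynomial.aeval_X]
      by_cases hi : i ∈ s
      · rw [if_pos hi, mul_zero, sub_zero]
        exact Ideal.mul_mem_left _ _ (Ideal.subset_span ⟨i, hi, rfl⟩)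
      · rw [if_neg hi]
        have : p * MvPolynomial.X i -
            (MvPolynomial.aeval (fun i => if i ∈ s then 0 else MvPolynomial.X i)) p *
              MvPolynomial.X i =
            (p - MvPolynomial.aeval (fun i => if i ∈ s then 0 else MvPolynomial.X i) p) *
              MvPolynomial.X i := by ring
        rw [this]
        exact Ideal.mul_mem_right _ _ hp

theorem vi_isPrime (s : Set (Fin n)) : (vi K s).IsPrime := by
  have hker : vi K s = RingHom.ker ((MvPolynomial.aeval
      (fun i => if i ∈ s then 0 else MvPolynomial.X i)).toRingHom :
      MvPolynomial (Fin n) K →+* MvPolynomial (Fin n) K) := by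
    apply le_antisymm
    · rw [vi, Ideal.span_le]
      rintro _ ⟨i, hi, rfl⟩
      simp [RingHom.mem_ker, if_pos hi]
    · intro p hp
      rw [RingHom.mem_ker] at hp
      have := sub_aeval_mem_vi s p
      rw [show MvPolynomial.aeval (fun i => if i ∈ s then 0 else MvPolynomial.X i) p
          = 0 from hp, sub_zero] at this
      exact this
  rw [hker]
  exact RingHom.ker_isPrime _

theorem isVarIdeal_vi (s : Set (Fin n)) : ∃ s', vi K s = Ideal.span (MvPolynomial.X '' s') :=
  ⟨s, rfl⟩

end PC

namespace PC

variable {n : ℕ} {K : Type*} [Field K]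

theorem idealOf_union {G G' : Set (Mon n)} :
    idealOf K (G ∪ G') = idealOf K G ⊔ idealOf K G' := by
  rw [idealOf, Set.image_union, Ideal.span_union]
  rfl

theorem mdeg_add (a b : Mon n) : mdeg (a + b) = mdeg a + mdeg b := by
  simp [mdeg, Finsupp.sum_add_index]

theorem mdeg_single (l : Fin n) (k : ℕ) : mdeg (Finsupp.single l k) = k := by
  simp [mdeg, Finsupp.sum_single_index]

theorem exists_mdeg_minimal {p : Mon n → Prop} (h : ∃ μ, p μ) :
    ∃ μ, p μ ∧ ∀ ν, p ν → mdeg μ ≤ mdeg ν := by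
  obtain ⟨μ₀, h₀⟩ := h
  have hD : {d | ∃ μ, p μ ∧ mdeg μ = d}.Nonempty := ⟨_, μ₀, h₀, rfl⟩
  obtain ⟨μ, hμ, hd⟩ := Nat.sInf_mem hD
  exact ⟨μ, hμ, fun ν hν => hd ▸ Nat.sInf_le ⟨ν, hν, rfl⟩⟩

theorem subquot_iso (c c' : Ideal (MvPolynomial (Fin n) K)) (v : Mon n)
    (P : Ideal (MvPolynomial (Fin n) K)) (hle : c ≤ c')
    (h2 : c' = c ⊔ Ideal.span {mono K v})
    (hcol : ∀ f : MvPolynomial (Fin n) K, f * mono K v ∈ c ↔ f ∈ P) :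
    Nonempty ((↥c' ⧸ Submodule.comap c'.subtype c) ≃ₗ[MvPolynomial (Fin n) K]
      (MvPolynomial (Fin n) K ⧸ P)) := by
  have hv : mono K v ∈ c' := by
    rw [h2]; exact Submodule.mem_sup_right (Ideal.subset_span rfl)
  let φ : MvPolynomial (Fin n) K →ₗ[MvPolynomial (Fin n) K]
      (↥c' ⧸ Submodule.comap c'.subtype c) :=
    { toFun := fun f => Submodule.Quotient.mk ⟨f * mono K v, Ideal.mul_mem_left _ _ hv⟩
      map_add' := fun f g => by
        rw [← Submodule.Quotient.mk_add]
        exact congrArg _ (Subtype.ext (add_mul f g (mono K v)))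
      map_smul' := fun a f => by
        rw [RingHom.id_apply, ← Submodule.Quotient.mk_smul]
        refine congrArg _ (Subtype.ext ?_)
        show a * f * mono K v = a * (f * mono K v)
        ring }
  have hsurj : Function.Surjective φ := by
    intro q
    obtain ⟨⟨y, hy⟩, rfl⟩ := Submodule.Quotient.mk_surjective _ q
    have hy' := hy
    rw [h2, Submodule.mem_sup] at hy'
    obtain ⟨z, hz, u, hu, hzu⟩ := hy'
    rw [Ideal.mem_span_singleton'] at hu
    obtain ⟨f, rfl⟩ := hu
    refine ⟨f, ?_⟩
    show Submodule.Quotient.mk _ = Submodule.Quotient.mk _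
    rw [Submodule.Quotient.eq]
    rw [Submodule.mem_comap]
    have : ((⟨f * mono K v, Ideal.mul_mem_left _ _ hv⟩ : c') - ⟨y, hy⟩ : c')
        = (⟨f * mono K v - y, Submodule.sub_mem _ (Ideal.mul_mem_left _ _ hv) hy⟩ : c') := by
      exact Subtype.ext rfl
    rw [this]
    show f * mono K v - y ∈ c
    have : f * mono K v - y = -z := by rw [← hzu]; ring
    rw [this]
    exact neg_mem hz
  have hker : LinearMap.ker φ = P := by
    ext f
    rw [LinearMap.mem_ker]
    show Submodule.Quotient.mk _ = 0 ↔ _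
    rw [Submodule.Quotient.mk_eq_zero, Submodule.mem_comap]
    exact hcol f
  exact ⟨hker ▸ (LinearMap.quotKerEquivOfSurjective φ hsurj).symm⟩

end PC

set_option maxHeartbeats 1000000 in
theorem _dummyPC : True := trivial

namespace PC

set_option maxHeartbeats 1000000
set_option synthInstance.maxHeartbeats 400000

variable {n : ℕ} {K : Type*} [Field K]

theorem mkP_smul (P : Ideal (MvPolynomial (Fin n) K)) (f r : MvPolynomial (Fin n) K) :
    f • (Ideal.Quotient.mk P r) = Ideal.Quotient.mk P (f * r) := rfl

theorem mkP_eq (P : Ideal (MvPolynomial (Fin n) K)) (r : MvPolynomial (Fin n) K) :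
    Ideal.Quotient.mk P r = Submodule.Quotient.mk r := rfl

theorem hconst_mem_vi (p : MvPolynomial (Fin n) K) (hp : MvPolynomial.constantCoeff p = 0) :
    p ∈ vi K (Set.univ : Set (Fin n)) := by
  rw [mem_vi]
  intro μ hμ
  have hμ0 : μ ≠ 0 := by
    intro h
    rw [MvPolynomial.mem_support_iff] at hμ
    apply hμ
    rw [h]
    exact hp
  obtain ⟨i, hi⟩ := Finsupp.ne_iff.mp hμ0
  exact ⟨i, trivial, by simpa using hi⟩

theorem extract_step (G H : Set (Mon n)) (c' : Ideal (MvPolynomial (Fin n) K))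
    (hc' : c' = idealOf K H)
    (hle : idealOf K G ≤ c')
    (P : Ideal (MvPolynomial (Fin n) K)) (hP : P.IsPrime)
    (hiso : Nonempty ((↥c' ⧸ Submodule.comap c'.subtype (idealOf K G))
      ≃ₗ[MvPolynomial (Fin n) K] (MvPolynomial (Fin n) K ⧸ P))) :
    ∃ v : Mon n, c' = idealOf K (insert v G) ∧
      (∀ f, f * mono K v ∈ idealOf K G ↔ f ∈ P) := by
  classical
  obtain ⟨ψ⟩ := hiso
  set c : Ideal (MvPolynomial (Fin n) K) := idealOf K G with hc
  have hmonoc' : ∀ (y : MvPolynomial (Fin n) K), y ∈ c' → ∀ μ ∈ y.support, mono K μ ∈ c' := by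
    intro y hy μ hμ
    rw [hc', mem_idealOf] at hy
    rw [hc', mono_mem]
    exact hy μ hμ
  -- c ≠ c'
  have hne : c ≠ c' := by
    intro h
    have htop : Submodule.comap c'.subtype c = ⊤ := by
      rw [h]; ext x; simpa using x.2
    have hz : ∀ z : (↥c' ⧸ Submodule.comap c'.subtype c), z = 0 := by
      intro z
      obtain ⟨y, rfl⟩ := Submodule.Quotient.mk_surjective _ z
      rw [Submodule.Quotient.mk_eq_zero, htop]; trivial
    have h1 : (Ideal.Quotient.mk P 1 : MvPolynomial (Fin n) K ⧸ P) = 0 := by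
      calc Ideal.Quotient.mk P 1 = ψ (ψ.symm (Ideal.Quotient.mk P 1)) :=
            (ψ.apply_symm_apply _).symm
        _ = ψ 0 := by rw [hz (ψ.symm (Ideal.Quotient.mk P 1))]
        _ = 0 := ψ.map_zero
    exact hP.ne_top ((Ideal.eq_top_iff_one P).mpr (Ideal.Quotient.eq_zero_iff_mem.mp h1))
  -- A nonempty
  have hA : ∃ μ, mono K μ ∈ c' ∧ mono K μ ∉ c := by
    obtain ⟨y, hyc', hyc⟩ : ∃ y, y ∈ c' ∧ y ∉ c := by
      by_contra h
      push_neg at h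
      exact hne (le_antisymm hle (fun y hy => h y hy))
    have hns : ¬ ∀ μ ∈ y.support, ∃ g ∈ G, g ≤ μ := fun hh => hyc (mem_idealOf.mpr hh)
    push_neg at hns
    obtain ⟨μ, hμs, hμn⟩ := hns
    refine ⟨μ, hmonoc' y hyc' μ hμs, fun hmem => ?_⟩
    obtain ⟨g, hg, hgle⟩ := mono_mem.mp hmem
    exact hμn g hg hgle
  obtain ⟨v, ⟨hvc', hvc⟩, hvmin⟩ := exists_mdeg_minimal hA
  -- r with mk r = ψ (mk mono v)
  obtain ⟨r, hr⟩ := Ideal.Quotient.mk_surjective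
    (ψ (Submodule.Quotient.mk ⟨mono K v, hvc'⟩))
  have hrP : r ∉ P := by
    intro hrp
    have h0 : ψ (Submodule.Quotient.mk ⟨mono K v, hvc'⟩) = 0 := by
      rw [← hr, Ideal.Quotient.eq_zero_iff_mem]; exact hrp
    have h1 : (Submodule.Quotient.mk ⟨mono K v, hvc'⟩ :
        (↥c' ⧸ Submodule.comap c'.subtype c)) = 0 := by
      apply ψ.injective
      rw [h0, ψ.map_zero]
    rw [Submodule.Quotient.mk_eq_zero] at h1
    exact hvc (by simpa using h1)
  -- colon property for v
  have hmk_smul : ∀ (f : MvPolynomial (Fin n) K) (y : MvPolynomial (Fin n) K) (hy : y ∈ c'),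
      (Submodule.Quotient.mk ⟨f * y, Ideal.mul_mem_left _ _ hy⟩ :
        (↥c' ⧸ Submodule.comap c'.subtype c)) = f • Submodule.Quotient.mk ⟨y, hy⟩ := by
    intro f y hy
    rw [← Submodule.Quotient.mk_smul]
    rfl
  have hcolv : ∀ f : MvPolynomial (Fin n) K, f * mono K v ∈ c ↔ f ∈ P := by
    intro f
    have hchain : f * mono K v ∈ c ↔ (Submodule.Quotient.mk
        ⟨f * mono K v, Ideal.mul_mem_left _ _ hvc'⟩ :
        (↥c' ⧸ Submodule.comap c'.subtype c)) = 0 := by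
      rw [Submodule.Quotient.mk_eq_zero]
      exact ⟨fun h => Submodule.mem_comap.mpr h, fun h => Submodule.mem_comap.mp h⟩
    rw [hchain, hmk_smul f (mono K v) hvc']
    rw [← ψ.map_eq_zero_iff, map_smul, ← hr, mkP_smul,
      Ideal.Quotient.eq_zero_iff_mem]
    constructor
    · intro h
      rcases hP.mem_or_mem h with h | h
      · exact h
      · exact absurd h hrP
    · intro h
      exact Ideal.mul_mem_right _ _ h
  -- E construction
  set EG : Set (Mon n) := {μ | ∃ l γ, γ ∈ H ∧ μ = Finsupp.single l 1 + γ} with hEG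
  set cE : Ideal (MvPolynomial (Fin n) K) := idealOf K (G ∪ EG) with hcE
  have hced : c ≤ cE := idealOf_mono_set Set.subset_union_left
  have hXE : ∀ (l : Fin n) (y : MvPolynomial (Fin n) K), y ∈ c' →
      MvPolynomial.X l * y ∈ cE := by
    intro l y hy
    have hxy : MvPolynomial.X l * y = y * mono K (Finsupp.single l 1) := by
      rw [mul_comm]; rfl
    rw [hxy, hcE, mul_mono_mem]
    intro μ hμ
    rw [hc', mem_idealOf] at hy
    obtain ⟨h0, hh0, hle0⟩ := hy μ hμ
    refine ⟨Finsupp.single l 1 + h0, Or.inr ⟨l, h0, hh0, rfl⟩, ?_⟩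
    rw [add_comm]
    exact add_le_add_left hle0 _
  have hsubmono : ∀ μ ν : Mon n, μ ≤ ν → mono K μ ∈ c → mono K ν ∈ c := by
    intro μ ν hle' hm
    rw [mono_mem] at hm ⊢
    obtain ⟨g, hg, h⟩ := hm
    exact ⟨g, hg, h.trans hle'⟩
  have hstep : ∀ (ν : Mon n) (l : Fin n) (γ : Mon n), γ ∈ H →
      Finsupp.single l 1 + γ ≤ ν →
      mono K (ν - Finsupp.single l 1) ∈ c' ∧ (ν - Finsupp.single l 1) ≤ ν ∧
      mdeg (ν - Finsupp.single l 1) + 1 = mdeg ν := by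
    intro ν l γ hγ hle'
    have h1 : Finsupp.single l 1 ≤ ν := le_trans (self_le_add_right _ _) hle'
    have hγν : γ ≤ ν - Finsupp.single l 1 := le_tsub_of_add_le_left hle'
    refine ⟨by rw [hc', mono_mem]; exact ⟨γ, hγ, hγν⟩, tsub_le_self, ?_⟩
    have hca : ν - Finsupp.single l 1 + Finsupp.single l 1 = ν := tsub_add_cancel_of_le h1
    calc mdeg (ν - Finsupp.single l 1) + 1
        = mdeg (ν - Finsupp.single l 1) + mdeg (Finsupp.single l 1) := by rw [mdeg_single]
      _ = mdeg ((ν - Finsupp.single l 1) + Finsupp.single l 1) := (mdeg_add _ _).symm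
      _ = mdeg ν := by rw [hca]
  have hvE : mono K v ∉ cE := by
    intro hmem
    rw [hcE, mono_mem] at hmem
    obtain ⟨g, hg, hgle⟩ := hmem
    rcases hg with hg | hg
    · exact hvc (mono_mem.mpr ⟨g, hg, hgle⟩)
    · obtain ⟨l, γ, hγ, rfl⟩ := hg
      obtain ⟨hin, hlev, hdeg⟩ := hstep v l γ hγ hgle
      have hcmem : mono K (v - Finsupp.single l 1) ∈ c := by
        by_contra hnot
        have := hvmin _ ⟨hin, hnot⟩
        omega
      exact hvc (hsubmono _ _ hlev hcmem)
  -- the submodule V and key lemma K5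
  obtain ⟨gbar, hgbar⟩ := Submodule.Quotient.mk_surjective _ (ψ.symm (Ideal.Quotient.mk P 1))
  set V : Submodule (MvPolynomial (Fin n) K) (MvPolynomial (Fin n) K ⧸ P) :=
    Submodule.map (ψ : (↥c' ⧸ Submodule.comap c'.subtype c) →ₗ[MvPolynomial (Fin n) K]
      (MvPolynomial (Fin n) K ⧸ P))
      (Submodule.map (Submodule.mkQ _) (Submodule.comap c'.subtype cE)) with hV
  have hXl : ∀ l : Fin n, Ideal.Quotient.mk P (MvPolynomial.X l) ∈ V := by
    intro l
    have h1 : Ideal.Quotient.mk P (MvPolynomial.X l) = ψ (Submodule.Quotient.mk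
        ⟨MvPolynomial.X l * ↑gbar, Ideal.mul_mem_left _ _ gbar.2⟩) := by
      rw [hmk_smul (MvPolynomial.X l) ↑gbar gbar.2]
      have : (Submodule.Quotient.mk gbar : (↥c' ⧸ Submodule.comap c'.subtype c))
          = ψ.symm (Ideal.Quotient.mk P 1) := hgbar
      rw [map_smul, this, ψ.apply_symm_apply, mkP_smul, mul_one]
    rw [h1]
    refine Submodule.mem_map.mpr ⟨_, ?_, rfl⟩
    refine Submodule.mem_map.mpr ⟨⟨MvPolynomial.X l * ↑gbar, Ideal.mul_mem_left _ _ gbar.2⟩,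
      ?_, Submodule.mkQ_apply _ _⟩
    show MvPolynomial.X l * ↑gbar ∈ cE
    exact hXE l ↑gbar gbar.2
  have hK5 : ∀ (y : MvPolynomial (Fin n) K) (hy : y ∈ c') (r' : MvPolynomial (Fin n) K),
      r' ∈ vi K (Set.univ : Set (Fin n)) →
      ψ (Submodule.Quotient.mk ⟨y, hy⟩) = Ideal.Quotient.mk P r' → y ∈ cE := by
    intro y hy r' hr' hψ
    have hmkV : Ideal.Quotient.mk P r' ∈ V := by
      have himg : Submodule.map (P.mkQ) (vi K (Set.univ : Set (Fin n))) ≤ V := by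
        rw [vi, Ideal.span, Submodule.map_span, Submodule.span_le]
        rintro _ ⟨_, ⟨l, -, rfl⟩, rfl⟩
        exact hXl l
      exact himg (Submodule.mem_map_of_mem hr')
    obtain ⟨z, hzW, hzV⟩ := Submodule.mem_map.mp hmkV
    obtain ⟨⟨z', hz'c'⟩, hz'cE, rfl⟩ := Submodule.mem_map.mp hzW
    have heq : (Submodule.Quotient.mk ⟨y, hy⟩ : (↥c' ⧸ Submodule.comap c'.subtype c))
        = Submodule.Quotient.mk ⟨z', hz'c'⟩ := by
      apply ψ.injective
      rw [hψ]
      rw [← hzV]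
      rfl
    rw [Submodule.Quotient.eq] at heq
    have hsub : y - z' ∈ c := Submodule.mem_comap.mp heq
    have hy2 : y = (y - z') + z' := by ring
    rw [hy2]
    exact Submodule.add_mem _ (hced hsub) (Submodule.mem_comap.mp hz'cE)
  -- main claim
  have hclaim : ∀ ν : Mon n, mono K ν ∈ c' → (mono K ν ∈ c ∨ v ≤ ν) := by
    by_contra hbad
    push_neg at hbad
    obtain ⟨ν₀, h1, h2, h3⟩ := hbad
    obtain ⟨ν, ⟨hνc', hνc, hνv⟩, hνmin⟩ := exists_mdeg_minimal (p := fun ν =>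
      mono K ν ∈ c' ∧ mono K ν ∉ c ∧ ¬ v ≤ ν) ⟨ν₀, h1, h2, h3⟩
    have hνE : mono K ν ∉ cE := by
      intro hmem
      rw [hcE, mono_mem] at hmem
      obtain ⟨g, hg, hgle⟩ := hmem
      rcases hg with hg | hg
      · exact hνc (mono_mem.mpr ⟨g, hg, hgle⟩)
      · obtain ⟨l, γ, hγ, rfl⟩ := hg
        obtain ⟨hin, hlev, hdeg⟩ := hstep ν l γ hγ hgle
        by_cases hc0 : mono K (ν - Finsupp.single l 1) ∈ c
        · exact hνc (hsubmono _ _ hlev hc0)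
        · by_cases hv0 : v ≤ ν - Finsupp.single l 1
          · exact hνv (hv0.trans hlev)
          · have := hνmin _ ⟨hin, hc0, hv0⟩; omega
    obtain ⟨rν, hrν⟩ := Ideal.Quotient.mk_surjective
      (ψ (Submodule.Quotient.mk ⟨mono K ν, hνc'⟩))
    set a : K := MvPolynomial.constantCoeff rν with hadef
    set b : K := MvPolynomial.constantCoeff r with hbdef
    have ha : a ≠ 0 := by
      intro h0
      exact hνE (hK5 (mono K ν) hνc' rν (hconst_mem_vi rν h0) hrν.symm)
    set y : MvPolynomial (Fin n) K :=
      MvPolynomial.C a * mono K v - MvPolynomial.C b * mono K ν with hydef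
    have hyc' : y ∈ c' := Submodule.sub_mem _ (Ideal.mul_mem_left _ _ hvc')
      (Ideal.mul_mem_left _ _ hνc')
    have hψy : ψ (Submodule.Quotient.mk ⟨y, hyc'⟩) =
        Ideal.Quotient.mk P (MvPolynomial.C a * r - MvPolynomial.C b * rν) := by
      have h1 : (Submodule.Quotient.mk ⟨y, hyc'⟩ : (↥c' ⧸ Submodule.comap c'.subtype c)) =
          (MvPolynomial.C a : MvPolynomial (Fin n) K) •
              (Submodule.Quotient.mk ⟨mono K v, hvc'⟩ :
              (↥c' ⧸ Submodule.comap c'.subtype c))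
            - (MvPolynomial.C b : MvPolynomial (Fin n) K) •
              (Submodule.Quotient.mk ⟨mono K ν, hνc'⟩ :
              (↥c' ⧸ Submodule.comap c'.subtype c)) := by
        rw [← Submodule.Quotient.mk_smul, ← Submodule.Quotient.mk_smul,
          ← Submodule.Quotient.mk_sub]
        rfl
      rw [h1, map_sub, map_smul, map_smul, ← hr, ← hrν, mkP_smul, mkP_smul]
      rfl
    have hcc : MvPolynomial.constantCoeff
        (MvPolynomial.C a * r - MvPolynomial.C b * rν) = 0 := by
      rw [map_sub, map_mul, map_mul, MvPolynomial.constantCoeff_C,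
        MvPolynomial.constantCoeff_C, ← hadef, ← hbdef]
      ring
    have hymem := hK5 y hyc' _ (hconst_mem_vi _ hcc) hψy
    have hνnev : ν ≠ v := fun h => hνv (h ▸ le_refl v)
    have hvsupp : v ∈ y.support := by
      rw [MvPolynomial.mem_support_iff]
      have hcoeff : MvPolynomial.coeff v y = a := by
        rw [hydef]
        rw [MvPolynomial.coeff_sub, MvPolynomial.coeff_C_mul, MvPolynomial.coeff_C_mul]
        rw [mono, mono, MvPolynomial.coeff_monomial, MvPolynomial.coeff_monomial]
        rw [if_pos rfl, if_neg hνnev]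
        ring
      rw [hcoeff]
      exact ha
    have := mem_idealOf.mp (by rw [hcE] at hymem; exact hymem) v hvsupp
    exact hvE (by rw [hcE]; exact mono_mem.mpr this)
  refine ⟨v, le_antisymm ?_ ?_, hcolv⟩
  · intro y hy
    rw [mem_idealOf]
    intro μ hμ
    rcases hclaim μ (hmonoc' y hy μ hμ) with h | h
    · obtain ⟨g, hg, hgle⟩ := mono_mem.mp h
      exact ⟨g, Set.mem_insert_of_mem _ hg, hgle⟩
    · exact ⟨v, Set.mem_insert _ _, h⟩
  · rw [idealOf_insert]
    refine sup_le hle ?_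
    rw [Ideal.span_le]
    intro x hx
    rw [Set.mem_singleton_iff] at hx
    rw [hx]
    exact hvc'

end PC

namespace PC

variable {n : ℕ} {K : Type*} [Field K]

abbrev Step (n : ℕ) := Mon n × Set (Fin n)

/-- relative pretty-clean chain data: from `idealOf K G`, adding generators `p.1`
with colon prime given by variable set `p.2`, ending at `T`. -/
def Good (K : Type*) [Field K] {n : ℕ} :
    Set (Mon n) → List (Step n) → Ideal (MvPolynomial (Fin n) K) → Prop
  | G, [], T => idealOf K G = T
  | G, p :: L, T =>
      (∀ u : Mon n, mono K (u + p.1) ∈ idealOf K G ↔ ∃ i ∈ p.2, u i ≠ 0)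
      ∧ Good K (insert p.1 G) L T

def Ord {n : ℕ} (p q : Step n) : Prop := p.2 ⊆ q.2 → p.2 = q.2

theorem mono_mul (u v : Mon n) : mono K u * mono K v = mono K (u + v) := by
  simp [mono, MvPolynomial.monomial_mul]

theorem idealOf_insert_of_mem {v : Mon n} {G : Set (Mon n)}
    (h : mono K v ∈ idealOf K G) : idealOf K (insert v G) = idealOf K G := by
  rw [idealOf_insert]
  rw [sup_eq_left.mpr]
  rw [Ideal.span_le]
  intro x hx
  rw [Set.mem_singleton_iff] at hx
  exact hx ▸ h

theorem good_congr : ∀ (L : List (Step n)) (G G' : Set (Mon n))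
    (T : Ideal (MvPolynomial (Fin n) K)),
    idealOf K G = idealOf K G' → Good K G L T → Good K G' L T
  | [], G, G', T, h, hg => by
      rw [Good] at hg ⊢
      rw [← h]; exact hg
  | p :: L, G, G', T, h, hg => by
      rw [Good] at hg ⊢
      obtain ⟨hcol, htail⟩ := hg
      refine ⟨fun u => by rw [← h]; exact hcol u, ?_⟩
      refine good_congr L _ _ _ ?_ htail
      rw [idealOf_insert, idealOf_insert, h]

theorem good_append : ∀ (L1 L2 : List (Step n)) (G G1 : Set (Mon n))
    (T : Ideal (MvPolynomial (Fin n) K)),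
    Good K G L1 (idealOf K G1) → Good K G1 L2 T → Good K G (L1 ++ L2) T
  | [], L2, G, G1, T, h1, h2 => by
      rw [Good] at h1
      rw [List.nil_append]
      exact good_congr L2 G1 G T h1.symm h2
  | p :: L1, L2, G, G1, T, h1, h2 => by
      rw [Good] at h1
      rw [List.cons_append, Good]
      exact ⟨h1.1, good_append L1 L2 _ G1 T h1.2 h2⟩

def accG (G : Set (Mon n)) (L : List (Step n)) : Set (Mon n) :=
  L.foldl (fun G p => insert p.1 G) G

theorem accG_nil (G : Set (Mon n)) : accG G [] = G := rfl

theorem accG_cons (G : Set (Mon n)) (p : Step n) (L : List (Step n)) :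
    accG G (p :: L) = accG (insert p.1 G) L := rfl

theorem good_last : ∀ (L : List (Step n)) (G : Set (Mon n))
    (T : Ideal (MvPolynomial (Fin n) K)),
    Good K G L T → idealOf K (accG G L) = T
  | [], G, T, h => h
  | p :: L, G, T, h => by
      rw [accG_cons]
      exact good_last L _ T h.2

theorem take_accG : ∀ (L : List (Step n)) (k : ℕ) (hk : k < L.length) (G : Set (Mon n)),
    accG G (L.take (k+1)) = insert (L.get ⟨k, hk⟩).1 (accG G (L.take k))
  | p :: L, 0, hk, G => by simp [accG]
  | p :: L, k + 1, hk, G => by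
      rw [List.take_succ_cons, accG_cons, List.take_succ_cons, accG_cons]
      exact take_accG L k (by simpa using hk) (insert p.1 G)

theorem good_nth : ∀ (L : List (Step n)) (G : Set (Mon n))
    (T : Ideal (MvPolynomial (Fin n) K)), Good K G L T →
    ∀ (k : ℕ) (hk : k < L.length),
    (∀ u : Mon n, mono K (u + (L.get ⟨k, hk⟩).1) ∈ idealOf K (accG G (L.take k)) ↔
      ∃ i ∈ (L.get ⟨k, hk⟩).2, u i ≠ 0)
  | p :: L, G, T, h, 0, hk => by
      simpa [accG] using h.1
  | p :: L, G, T, h, k + 1, hk => by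
      rw [List.take_succ_cons, accG_cons]
      exact good_nth L (insert p.1 G) T h.2 k (by simpa using hk)

end PC

namespace PC

variable {n : ℕ} {K : Type*} [Field K]

theorem prettyClean_of_nat_chain (I : Ideal (MvPolynomial (Fin n) K)) (r : ℕ)
    (c : ℕ → Ideal (MvPolynomial (Fin n) K)) (P : ℕ → Ideal (MvPolynomial (Fin n) K))
    (hc0 : c 0 = I) (htop : c r = ⊤)
    (hmono : ∀ k, k ≤ r → IsMonomialIdeal (c k))
    (hle : ∀ k, k < r → c k ≤ c (k+1))
    (hP : ∀ k, k < r → (P k).IsPrime ∧ IsVarIdeal (P k))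
    (hiso : ∀ k, k < r → Nonempty
      ((↥(c (k+1)) ⧸ Submodule.comap (c (k+1)).subtype (c k)) ≃ₗ[MvPolynomial (Fin n) K]
        (MvPolynomial (Fin n) K ⧸ P k)))
    (hord : ∀ i j, i < j → j < r → P i ≤ P j → P i = P j) : PrettyClean I := by
  refine ⟨r, fun k => c k.val, fun k => P k.val, ?_, ?_, ?_, ?_, ?_, ?_, ?_⟩
  · exact hc0
  · simp only [Fin.val_last]; exact htop
  · intro k; exact hmono k.val (by omega)
  · intro k
    simp only [Fin.coe_castSucc, Fin.val_succ]
    exact hle k.val k.isLt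
  · intro k; exact hP k.val k.isLt
  · intro k
    simp only [Fin.coe_castSucc, Fin.val_succ]
    exact hiso k.val k.isLt
  · intro i j hij hPle
    exact hord i.val j.val (by exact_mod_cast hij) j.isLt hPle

theorem good_prettyClean (G : Set (Mon n)) (L : List (Step n))
    (hg : Good K G L ⊤) (hpw : List.Pairwise Ord L) : PrettyClean (idealOf K G) := by
  refine prettyClean_of_nat_chain _ L.length
    (fun k => idealOf K (accG G (L.take k)))
    (fun k => if h : k < L.length then vi K (L.get ⟨k, h⟩).2 else ⊥)
    (by rw [List.take_zero]; rfl) ?_ ?_ ?_ ?_ ?_ ?_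
  · rw [List.take_length]
    exact good_last L G ⊤ hg
  · intro k _; exact ⟨_, rfl⟩
  · intro k hk
    rw [take_accG L k hk]
    exact idealOf_mono_set (Set.subset_insert _ _)
  · intro k hk
    rw [dif_pos hk]
    exact ⟨vi_isPrime _, isVarIdeal_vi _⟩
  · intro k hk
    rw [dif_pos hk, take_accG L k hk]
    have hcol := good_nth L G ⊤ hg k hk
    apply subquot_iso _ _ (L.get ⟨k, hk⟩).1
    · exact idealOf_mono_set (Set.subset_insert _ _)
    · rw [idealOf_insert]
    · intro f
      rw [mul_mono_mem, mem_vi]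
      constructor
      · intro hf μ hμ
        have h2 : mono K (μ + (L.get ⟨k, hk⟩).1) ∈ idealOf K (accG G (L.take k)) :=
          mono_mem.mpr (hf μ hμ)
        exact (hcol μ).mp h2
      · intro hf μ hμ
        exact mono_mem.mp ((hcol μ).mpr (hf μ hμ))
  · intro i j hij hjr hPle
    rw [dif_pos (by omega : i < L.length), dif_pos hjr] at hPle ⊢
    have hget := List.pairwise_iff_get.mp hpw ⟨i, by omega⟩ ⟨j, hjr⟩ (by simpa using hij)
    have hsub : (L.get ⟨i, by omega⟩).2 ⊆ (L.get ⟨j, hjr⟩).2 := vi_subset_iff.mp hPle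
    rw [hget hsub]

theorem extract_chain : ∀ (r : ℕ) (G : Set (Mon n))
    (c : ℕ → Ideal (MvPolynomial (Fin n) K)) (P : ℕ → Ideal (MvPolynomial (Fin n) K)),
    c 0 = idealOf K G → c r = ⊤ → (∀ k, k ≤ r → IsMonomialIdeal (c k)) →
    (∀ k, k < r → c k ≤ c (k+1)) →
    (∀ k, k < r → (P k).IsPrime ∧ IsVarIdeal (P k)) →
    (∀ k, k < r → Nonempty
      ((↥(c (k+1)) ⧸ Submodule.comap (c (k+1)).subtype (c k)) ≃ₗ[MvPolynomial (Fin n) K]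
        (MvPolynomial (Fin n) K ⧸ P k))) →
    ∃ L : List (Step n), Good K G L ⊤ ∧ L.length = r ∧
      ∀ (k : ℕ) (hk : k < L.length), vi K (L.get ⟨k, hk⟩).2 = P k
  | 0, G, c, P, hc0, htop, _, _, _, _ => by
      refine ⟨[], ?_, rfl, fun k hk => absurd hk (by simp)⟩
      rw [Good, ← hc0, htop]
  | r + 1, G, c, P, hc0, htop, hmono, hle, hP, hiso => by
      have h1 := hiso 0 (by omega)
      rw [hc0] at h1
      obtain ⟨s, hs⟩ := (hP 0 (by omega)).2
      obtain ⟨v, hgen, hcol⟩ := extract_step G (hmono 1 (by omega)).choose (c 1)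
        (hmono 1 (by omega)).choose_spec (hc0 ▸ hle 0 (by omega)) (P 0) (hP 0 (by omega)).1 h1
      obtain ⟨L', hg', hlen', hprm'⟩ := extract_chain r (insert v G) (fun k => c (k+1))
        (fun k => P (k+1)) hgen htop (fun k hk => hmono (k+1) (by omega))
        (fun k hk => hle (k+1) (by omega)) (fun k hk => hP (k+1) (by omega))
        (fun k hk => hiso (k+1) (by omega))
      refine ⟨(v, s) :: L', ?_, by simpa using hlen', ?_⟩
      · rw [Good]
        refine ⟨?_, hg'⟩
        intro u
        rw [← mono_mul, hcol (mono K u), hs]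
        exact mono_mem_vi
      · intro k hk
        match k with
        | 0 => rw [List.get]; exact hs.symm ▸ rfl
        | k + 1 =>
            rw [List.get]
            exact hprm' k (by simpa using hk)

theorem extract_good (G : Set (Mon n)) (h : PrettyClean (idealOf K G)) :
    ∃ L : List (Step n), Good K G L ⊤ ∧ List.Pairwise Ord L := by
  obtain ⟨r, c, P, hc0, htop, hmono, hle, hP, hiso, hord⟩ := h
  have hminlt : ∀ k : ℕ, min k r < r + 1 := fun k => by omega
  set cN : ℕ → Ideal (MvPolynomial (Fin n) K) := fun k => c ⟨min k r, hminlt k⟩ with hcN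
  set PN : ℕ → Ideal (MvPolynomial (Fin n) K) :=
    fun k => if h : k < r then P ⟨k, h⟩ else ⊥ with hPN
  have hfin1 : ∀ (k : ℕ) (hk : k < r),
      (⟨min k r, hminlt k⟩ : Fin (r+1)) = (⟨k, hk⟩ : Fin r).castSucc := by
    intro k hk
    apply Fin.ext
    simp only [Fin.coe_castSucc]
    omega
  have hfin2 : ∀ (k : ℕ) (hk : k < r),
      (⟨min (k+1) r, hminlt (k+1)⟩ : Fin (r+1)) = (⟨k, hk⟩ : Fin r).succ := by
    intro k hk
    apply Fin.ext
    simp only [Fin.val_succ]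
    omega
  obtain ⟨L, hg, hlen, hprm⟩ := extract_chain r G cN PN
    (by show c ⟨min 0 r, hminlt 0⟩ = idealOf K G
        rw [← hc0]; congr 1)
    (by show c ⟨min r r, hminlt r⟩ = ⊤
        rw [← htop]; congr 1; exact Fin.ext (by simp))
    (fun k _ => hmono _)
    (fun k hk => by
      show c ⟨min k r, hminlt k⟩ ≤ c ⟨min (k+1) r, hminlt (k+1)⟩
      rw [hfin1 k hk, hfin2 k hk]
      exact hle ⟨k, hk⟩)
    (fun k hk => by
      show (if h : k < r then P ⟨k, h⟩ else ⊥).IsPrime ∧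
        IsVarIdeal (if h : k < r then P ⟨k, h⟩ else ⊥)
      rw [dif_pos hk]
      exact hP ⟨k, hk⟩)
    (fun k hk => by
      show Nonempty ((↥(c ⟨min (k+1) r, hminlt (k+1)⟩) ⧸
        Submodule.comap (c ⟨min (k+1) r, hminlt (k+1)⟩).subtype (c ⟨min k r, hminlt k⟩))
        ≃ₗ[MvPolynomial (Fin n) K]
        (MvPolynomial (Fin n) K ⧸ (if h : k < r then P ⟨k, h⟩ else ⊥)))
      rw [dif_pos hk, hfin1 k hk, hfin2 k hk]
      exact hiso ⟨k, hk⟩)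
  refine ⟨L, hg, ?_⟩
  rw [List.pairwise_iff_get]
  intro i j hij
  intro hsub
  have hi : (i : ℕ) < r := by omega
  have hj : (j : ℕ) < r := by omega
  have h1 : vi K (L.get i).2 = P ⟨i, hi⟩ := by
    have h := hprm i i.isLt
    rw [show PN i = P ⟨i, hi⟩ by rw [hPN]; simp only []; rw [dif_pos hi]] at h
    rw [← h]
  have h2 : vi K (L.get j).2 = P ⟨j, hj⟩ := by
    have h := hprm j j.isLt
    rw [show PN j = P ⟨j, hj⟩ by rw [hPN]; simp only []; rw [dif_pos hj]] at h
    rw [← h]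
  have hPle : P ⟨i, hi⟩ ≤ P ⟨j, hj⟩ := by
    rw [← h1, ← h2]
    exact vi_subset_iff.mpr hsub
  have := hord ⟨i, hi⟩ ⟨j, hj⟩ (by simpa using hij) hPle
  have hvi : vi K (L.get i).2 = vi K (L.get j).2 := by rw [h1, h2, this]
  exact Set.Subset.antisymm hsub (vi_subset_iff.mp (le_of_eq hvi.symm))

end PC

namespace PC

variable {n : ℕ} {K : Type*} [Field K]

noncomputable def eps (j : Fin n) (μ : Mon n) : Mon n := Finsupp.erase j μ

theorem eps_apply (j : Fin n) (μ : Mon n) (i : Fin n) :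
    eps j μ i = if i = j then 0 else μ i := by
  rw [eps, Finsupp.erase_apply]

theorem eps_free (j : Fin n) (μ : Mon n) : eps j μ j = 0 := by
  rw [eps_apply, if_pos rfl]

theorem eps_le {j : Fin n} {μ ν : Mon n} (h : μ ≤ ν) : eps j μ ≤ eps j ν := by
  rw [Finsupp.le_def] at h ⊢
  intro i
  rw [eps_apply, eps_apply]
  split_ifs
  · exact le_refl _
  · exact h i

theorem eps_le_self (j : Fin n) (μ : Mon n) : eps j μ ≤ μ := by
  rw [Finsupp.le_def]
  intro i
  rw [eps_apply]
  split_ifs <;> omega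

theorem eps_add (j : Fin n) (μ ν : Mon n) : eps j (μ + ν) = eps j μ + eps j ν := by
  ext i
  rw [Finsupp.add_apply, eps_apply, eps_apply, eps_apply, Finsupp.add_apply]
  split_ifs <;> omega

theorem eps_zero (j : Fin n) : eps j (0 : Mon n) = 0 := by
  ext i
  rw [eps_apply]
  split_ifs <;> simp

theorem eps_of_free {j : Fin n} {μ : Mon n} (h : μ j = 0) : eps j μ = μ := by
  ext i
  rw [eps_apply]
  split_ifs with hh
  · rw [hh, h]
  · rfl

theorem eps_single_one (j : Fin n) : eps j (Finsupp.single j 1) = 0 := by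
  ext i
  rw [eps_apply]
  split_ifs with hh
  · simp
  · simp [Finsupp.single_apply]
    intro he
    exact absurd he.symm hh

noncomputable def emap (j : Fin n) : List (Step n) → List (Step n)
  | [] => []
  | p :: L =>
      haveI := Classical.propDecidable (j ∈ p.2)
      if j ∈ p.2 then emap j L else (eps j p.1, p.2) :: emap j L

theorem emap_snd (j : Fin n) : ∀ (L : List (Step n)) (p : Step n), p ∈ emap j L →
    ∃ q ∈ L, q.2 = p.2 ∧ p.1 = eps j q.1
  | [], p, h => absurd h (by rw [emap]; simp)
  | q :: L, p, h => by
      rw [emap] at h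
      split_ifs at h with hjs
      · obtain ⟨q', hq', h2⟩ := emap_snd j L p h
        exact ⟨q', List.mem_cons_of_mem _ hq', h2⟩
      · rcases List.mem_cons.mp h with h | h
        · exact ⟨q, List.mem_cons_self, by rw [h], by rw [h]⟩
        · obtain ⟨q', hq', h2⟩ := emap_snd j L p h
          exact ⟨q', List.mem_cons_of_mem _ hq', h2⟩

theorem emap_free (j : Fin n) (L : List (Step n)) (hL : ∀ p ∈ L, j ∉ p.2) :
    ∀ p ∈ emap j L, p.1 j = 0 ∧ j ∉ p.2 := by
  intro p hp
  obtain ⟨q, hq, h2, h3⟩ := emap_snd j L p hp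
  exact ⟨h3 ▸ eps_free j q.1, h2 ▸ hL q hq⟩

theorem emap_not_mem (j : Fin n) (L : List (Step n)) : ∀ p ∈ emap j L, j ∉ p.2 := by
  induction L with
  | nil => intro p hp; rw [emap] at hp; simp at hp
  | cons q L ih =>
      intro p hp
      rw [emap] at hp
      split_ifs at hp with hjs
      · exact ih p hp
      · rcases List.mem_cons.mp hp with h | h
        · rw [h]; exact hjs
        · exact ih p h

theorem emap_pairwise (j : Fin n) : ∀ (L : List (Step n)),
    List.Pairwise Ord L → List.Pairwise Ord (emap j L)
  | [], _ => by rw [emap]; exact List.Pairwise.nil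
  | q :: L, h => by
      rw [emap]
      obtain ⟨hhead, htail⟩ := List.pairwise_cons.mp h
      split_ifs with hjs
      · exact emap_pairwise j L htail
      · refine List.pairwise_cons.mpr ⟨?_, emap_pairwise j L htail⟩
        intro p hp
        obtain ⟨q', hq', h2, _⟩ := emap_snd j L p hp
        show (eps j q.1, q.2).2 ⊆ p.2 → (eps j q.1, q.2).2 = p.2
        rw [← h2]
        exact hhead q' hq'

theorem eps_good (j : Fin n) : ∀ (L : List (Step n)) (G : Set (Mon n)),
    Good K G L ⊤ → Good K (eps j '' G) (emap j L) ⊤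
  | [], G, h => by
      rw [Good] at h
      rw [emap, Good]
      exact idealOf_eq_top_iff.mpr ⟨0, idealOf_eq_top_iff.mp h, eps_zero j⟩
  | p :: L, G, h => by
      obtain ⟨hcol, htail⟩ := h
      rw [emap]
      split_ifs with hjs
      · have hdead : mono K (eps j p.1) ∈ idealOf K (eps j '' G) := by
          have h1 : mono K (Finsupp.single j 1 + p.1) ∈ idealOf K G :=
            (hcol (Finsupp.single j 1)).mpr ⟨j, hjs, by simp⟩
          obtain ⟨γ, hγ, hle1⟩ := mono_mem.mp h1
          refine mono_mem.mpr ⟨eps j γ, Set.mem_image_of_mem _ hγ, ?_⟩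
          calc eps j γ ≤ eps j (Finsupp.single j 1 + p.1) := eps_le hle1
            _ = eps j (Finsupp.single j 1) + eps j p.1 := eps_add j _ _
            _ = eps j p.1 := by rw [eps_single_one, zero_add]
        have hg := eps_good j L (insert p.1 G) htail
        apply good_congr (emap j L) _ _ _ ?_ hg
        rw [Set.image_insert_eq]
        exact idealOf_insert_of_mem hdead
      · refine ⟨?_, ?_⟩
        · intro u
          constructor
          · intro hmem
            obtain ⟨γ', hγ', hle1⟩ := mono_mem.mp hmem
            obtain ⟨γ, hγ, rfl⟩ := hγ'
            have h2 : γ ≤ u + Finsupp.single j (γ j) + p.1 := by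
              rw [Finsupp.le_def]
              intro i
              have h3 := Finsupp.le_def.mp hle1 i
              rw [Finsupp.add_apply, eps_apply, eps_apply] at h3
              rw [Finsupp.add_apply, Finsupp.add_apply, Finsupp.single_apply]
              by_cases hij : i = j
              · subst hij
                rw [if_pos rfl, if_pos rfl] at h3
                rw [if_pos rfl]
                omega
              · rw [if_neg hij, if_neg hij] at h3
                rw [if_neg (fun he => hij he.symm)]
                omega
            have h3 := (hcol (u + Finsupp.single j (γ j))).mp
              (mono_mem.mpr ⟨γ, hγ, h2⟩)
            obtain ⟨i, his, hne⟩ := h3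
            have hij : i ≠ j := fun he => hjs (he ▸ his)
            refine ⟨i, his, ?_⟩
            rw [Finsupp.add_apply, Finsupp.single_apply,
              if_neg (fun he => hij he.symm), add_zero] at hne
            exact hne
          · rintro ⟨i, his, hne⟩
            have h1 : mono K (u + p.1) ∈ idealOf K G := (hcol u).mpr ⟨i, his, hne⟩
            obtain ⟨γ, hγ, hle1⟩ := mono_mem.mp h1
            refine mono_mem.mpr ⟨eps j γ, Set.mem_image_of_mem _ hγ, ?_⟩
            calc eps j γ ≤ eps j (u + p.1) := eps_le hle1
              _ = eps j u + eps j p.1 := eps_add j _ _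
              _ ≤ u + eps j p.1 := add_le_add_left (eps_le_self j u) _
        · have hg := eps_good j L (insert p.1 G) htail
          rw [Set.image_insert_eq] at hg
          exact hg

end PC

namespace PC

variable {n : ℕ} {K : Type*} [Field K]

def bset (j : Fin n) (t : ℕ) (w : Mon n) (GK Gt : Set (Mon n)) : Set (Mon n) :=
  (GK ∪ {w + Finsupp.single j t}) ∪ (fun γ => w + (γ - w)) '' Gt

def bacc (j : Fin n) (t : ℕ) (w : Mon n) (GK Gt : Set (Mon n)) (vt : Mon n) (a : ℕ) :
    Set (Mon n) :=
  bset j t w GK Gt ∪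
    (fun a' => w + (vt - w) + Finsupp.single j a') '' {a' | a ≤ a' ∧ a' < t}

noncomputable def bl (j : Fin n) (w vt : Mon n) (s : Set (Fin n)) : ℕ → List (Step n)
  | 0 => []
  | a + 1 => (w + (vt - w) + Finsupp.single j a, insert j s) :: bl j w vt s a

noncomputable def bmap (j : Fin n) (t : ℕ) (w : Mon n) : List (Step n) → List (Step n)
  | [] => []
  | p :: L =>
      haveI := Classical.propDecidable (∃ i ∈ p.2, (w - p.1) i ≠ 0)
      (if ∃ i ∈ p.2, (w - p.1) i ≠ 0 then [] else bl j w p.1 p.2 t) ++ bmap j t w L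

theorem bl_snd (j : Fin n) (w vt : Mon n) (s : Set (Fin n)) :
    ∀ (a : ℕ), ∀ q ∈ bl j w vt s a, q.2 = insert j s
  | 0, q, h => absurd h (by rw [bl]; simp)
  | a + 1, q, h => by
      rw [bl] at h
      rcases List.mem_cons.mp h with h | h
      · rw [h]
      · exact bl_snd j w vt s a q h

theorem bmap_snd (j : Fin n) (t : ℕ) (w : Mon n) :
    ∀ (L : List (Step n)), ∀ q ∈ bmap j t w L, ∃ p ∈ L, q.2 = insert j p.2
  | [], q, h => absurd h (by rw [bmap]; simp)
  | p :: L, q, h => by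
      rw [bmap] at h
      rcases List.mem_append.mp h with h | h
      · split_ifs at h
        · simp at h
        · exact ⟨p, List.mem_cons_self, bl_snd j w p.1 p.2 t q h⟩
      · obtain ⟨p', hp', h2⟩ := bmap_snd j t w L q h
        exact ⟨p', List.mem_cons_of_mem _ hp', h2⟩

theorem dcolon (w : Mon n) (Gt : Set (Mon n)) (vt : Mon n) (s : Set (Fin n))
    (HC : ∀ u : Mon n, mono K (u + vt) ∈ idealOf K Gt ↔ ∃ i ∈ s, u i ≠ 0)
    (HKEEP : ∀ i ∈ s, (w - vt) i = 0) :
    ∀ u : Mon n, (∃ γ ∈ Gt, γ - w ≤ u + (vt - w)) ↔ ∃ i ∈ s, u i ≠ 0 := by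
  intro u
  have hAB : (u + (w - vt)) + vt = (u + (vt - w)) + w := by
    ext i
    simp only [Finsupp.add_apply, Finsupp.tsub_apply]
    omega
  constructor
  · rintro ⟨γ, hγ, hle1⟩
    have h2 : γ ≤ (u + (w - vt)) + vt := by
      rw [hAB]
      exact tsub_le_iff_right.mp hle1
    obtain ⟨i, his, hne⟩ := (HC (u + (w - vt))).mp (mono_mem.mpr ⟨γ, hγ, h2⟩)
    refine ⟨i, his, ?_⟩
    rw [Finsupp.add_apply, HKEEP i his] at hne
    simpa using hne
  · rintro ⟨i, his, hne⟩
    have h1 : mono K ((u + (w - vt)) + vt) ∈ idealOf K Gt :=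
      (HC _).mpr ⟨i, his, by rw [Finsupp.add_apply, HKEEP i his]; simpa using hne⟩
    obtain ⟨γ, hγ, hle1⟩ := mono_mem.mp h1
    rw [hAB] at hle1
    exact ⟨γ, hγ, tsub_le_iff_right.mpr hle1⟩

theorem step_colon (j : Fin n) (t : ℕ) (w : Mon n) (hw : w j = 0)
    (GK : Set (Mon n)) (hGK : ∀ γ ∈ GK, γ j = 0)
    (Gt : Set (Mon n)) (hGt : ∀ γ ∈ Gt, γ j = 0) (hGKsub : GK ⊆ Gt)
    (vt : Mon n) (hvt : vt j = 0) (s : Set (Fin n))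
    (HC : ∀ u : Mon n, mono K (u + vt) ∈ idealOf K Gt ↔ ∃ i ∈ s, u i ≠ 0)
    (HKEEP : ∀ i ∈ s, (w - vt) i = 0)
    (a : ℕ) (hat : a < t) :
    ∀ u : Mon n, mono K (u + (w + (vt - w) + Finsupp.single j a)) ∈
      idealOf K (bacc j t w GK Gt vt (a+1)) ↔ ∃ i ∈ insert j s, u i ≠ 0 := by
  have hDC := dcolon (K := K) w Gt vt s HC HKEEP
  intro u
  constructor
  · intro hmem
    by_cases huj : u j ≠ 0
    · exact ⟨j, Set.mem_insert _ _, huj⟩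
    push_neg at huj
    obtain ⟨δ, hδ, hle1⟩ := mono_mem.mp hmem
    rcases hδ with ((hδ | hδ) | ⟨γ, hγ, rfl⟩) | ⟨a', ⟨ha1, ha2⟩, rfl⟩
    · -- δ ∈ GK
      have hfree : δ j = 0 := hGK δ hδ
      have hkey : δ - w ≤ u + (vt - w) := by
        rw [Finsupp.le_def]
        intro i
        have h3 := Finsupp.le_def.mp hle1 i
        simp only [Finsupp.add_apply, Finsupp.tsub_apply, Finsupp.single_apply] at h3 ⊢
        by_cases hij : i = j
        · subst hij
          rw [if_pos rfl] at h3
          omega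
        · rw [if_neg (fun hh => hij hh.symm)] at h3
          omega
      obtain ⟨i, his, hne⟩ := (hDC u).mp ⟨δ, hGKsub hδ, hkey⟩
      exact ⟨i, Set.mem_insert_of_mem _ his, hne⟩
    · -- δ = w + single j t
      exfalso
      rw [Set.mem_singleton_iff] at hδ
      subst hδ
      have h3 := Finsupp.le_def.mp hle1 j
      simp only [Finsupp.add_apply, Finsupp.tsub_apply, Finsupp.single_apply,
        eq_self_iff_true, if_true] at h3
      omega
    · -- δ = w + (γ - w)
      have hγfree : γ j = 0 := hGt γ hγ
      have hkey : γ - w ≤ u + (vt - w) := by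
        rw [Finsupp.le_def]
        intro i
        have h3 := Finsupp.le_def.mp hle1 i
        simp only [Finsupp.add_apply, Finsupp.tsub_apply, Finsupp.single_apply] at h3 ⊢
        by_cases hij : i = j
        · subst hij
          rw [if_pos rfl] at h3
          omega
        · rw [if_neg (fun hh => hij hh.symm)] at h3
          omega
      obtain ⟨i, his, hne⟩ := (hDC u).mp ⟨γ, hγ, hkey⟩
      exact ⟨i, Set.mem_insert_of_mem _ his, hne⟩
    · -- δ = w + (vt - w) + single j a', a+1 ≤ a' < t
      exfalso
      have h3 := Finsupp.le_def.mp hle1 j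
      simp only [Finsupp.add_apply, Finsupp.tsub_apply, Finsupp.single_apply,
        eq_self_iff_true, if_true] at h3
      omega
  · rintro ⟨i, his, hne⟩
    rcases Set.mem_insert_iff.mp his with rfl | his'
    · by_cases hat1 : a + 1 = t
      · refine mono_mem.mpr ⟨w + Finsupp.single i t, Or.inl (Or.inl (Or.inr rfl)), ?_⟩
        rw [Finsupp.le_def]
        intro i'
        simp only [Finsupp.add_apply, Finsupp.tsub_apply, Finsupp.single_apply]
        by_cases hij : i' = i
        · subst hij
          rw [if_pos rfl, if_pos rfl]
          omega
        · rw [if_neg (fun hh => hij hh.symm), if_neg (fun hh => hij hh.symm)]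
          omega
      · refine mono_mem.mpr ⟨w + (vt - w) + Finsupp.single i (a+1),
          Or.inr ⟨a+1, ⟨le_refl _, by omega⟩, rfl⟩, ?_⟩
        rw [Finsupp.le_def]
        intro i'
        simp only [Finsupp.add_apply, Finsupp.tsub_apply, Finsupp.single_apply]
        by_cases hij : i' = i
        · subst hij
          rw [if_pos rfl, if_pos rfl]
          omega
        · rw [if_neg (fun hh => hij hh.symm), if_neg (fun hh => hij hh.symm)]
          omega
    · obtain ⟨γ, hγ, hkey⟩ := (hDC u).mpr ⟨i, his', hne⟩
      refine mono_mem.mpr ⟨w + (γ - w), Or.inl (Or.inr ⟨γ, hγ, rfl⟩), ?_⟩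
      rw [Finsupp.le_def]
      intro i'
      have h3 := Finsupp.le_def.mp hkey i'
      simp only [Finsupp.add_apply, Finsupp.tsub_apply, Finsupp.single_apply] at h3 ⊢
      by_cases hij : i' = j
      · subst hij
        rw [if_pos rfl]
        have : γ i' = 0 := hGt γ hγ
        omega
      · rw [if_neg (fun hh => hij hh.symm)]
        omega

end PC

namespace PC

variable {n : ℕ} {K : Type*} [Field K]

theorem idealOf_le_of_forall {A : Set (Mon n)} {I : Ideal (MvPolynomial (Fin n) K)}
    (h : ∀ γ ∈ A, mono K γ ∈ I) : idealOf K A ≤ I := by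
  rw [idealOf, Ideal.span_le]
  rintro _ ⟨γ, hγ, rfl⟩
  exact h γ hγ

theorem block_good (j : Fin n) (t : ℕ) (ht : 0 < t) (w : Mon n) (hw : w j = 0)
    (GK : Set (Mon n)) (hGK : ∀ γ ∈ GK, γ j = 0)
    (Gt : Set (Mon n)) (hGt : ∀ γ ∈ Gt, γ j = 0) (hGKsub : GK ⊆ Gt)
    (vt : Mon n) (hvt : vt j = 0) (s : Set (Fin n))
    (HC : ∀ u : Mon n, mono K (u + vt) ∈ idealOf K Gt ↔ ∃ i ∈ s, u i ≠ 0)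
    (HKEEP : ∀ i ∈ s, (w - vt) i = 0) :
    ∀ (a : ℕ), a ≤ t → Good K (bacc j t w GK Gt vt a) (bl j w vt s a)
      (idealOf K (insert (w + (vt - w)) (bset j t w GK Gt)))
  | 0, _ => by
      rw [bl, Good]
      apply le_antisymm
      · apply idealOf_le_of_forall
        rintro γ (hγ | ⟨a', _, rfl⟩)
        · exact mono_mem.mpr ⟨γ, Set.mem_insert_of_mem _ hγ, le_refl _⟩
        · exact mono_mem.mpr ⟨w + (vt - w), Set.mem_insert _ _, le_add_right (le_refl _)⟩
      · apply idealOf_le_of_forall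
        rintro γ (rfl | hγ)
        · refine mono_mem.mpr ⟨w + (vt - w) + Finsupp.single j 0,
            Or.inr ⟨0, ⟨le_refl 0, ht⟩, rfl⟩, le_of_eq ?_⟩
          rw [Finsupp.single_zero, add_zero]
        · exact mono_mem.mpr ⟨γ, Or.inl hγ, le_refl _⟩
  | a + 1, hat => by
      rw [bl, Good]
      constructor
      · exact step_colon j t w hw GK hGK Gt hGt hGKsub vt hvt s HC HKEEP a (by omega)
      · have hset : insert (w + (vt - w) + Finsupp.single j a)
            (bacc j t w GK Gt vt (a+1)) = bacc j t w GK Gt vt a := by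
          ext μ
          simp only [Set.mem_insert_iff, bacc, Set.mem_union, Set.mem_image,
            Set.mem_setOf_eq]
          constructor
          · rintro (rfl | (h | ⟨a', ⟨h1, h2⟩, rfl⟩))
            · exact Or.inr ⟨a, ⟨le_refl _, by omega⟩, rfl⟩
            · exact Or.inl h
            · exact Or.inr ⟨a', ⟨by omega, h2⟩, rfl⟩
          · rintro (h | ⟨a', ⟨h1, h2⟩, rfl⟩)
            · exact Or.inr (Or.inl h)
            · by_cases ha : a' = a
              · subst ha; exact Or.inl rfl
              · exact Or.inr (Or.inr ⟨a', ⟨by omega, h2⟩, rfl⟩)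
        rw [hset]
        exact block_good j t ht w hw GK hGK Gt hGt hGKsub vt hvt s HC HKEEP a (by omega)

theorem bottom_good (j : Fin n) (t : ℕ) (ht : 0 < t) (w : Mon n) (hw : w j = 0)
    (GK : Set (Mon n)) (hGK : ∀ γ ∈ GK, γ j = 0) :
    ∀ (L : List (Step n)) (Gt : Set (Mon n)), Good K Gt L ⊤ → GK ⊆ Gt →
    (∀ γ ∈ Gt, γ j = 0) → (∀ p ∈ L, p.1 j = 0 ∧ j ∉ p.2) →
    Good K (bset j t w GK Gt) (bmap j t w L) (idealOf K (GK ∪ {w}))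
  | [], Gt, hg, _, _, _ => by
      rw [Good] at hg
      rw [bmap, Good]
      have h0 : (0 : Mon n) ∈ Gt := idealOf_eq_top_iff.mp hg
      apply le_antisymm
      · apply idealOf_le_of_forall
        rintro γ ((hγ | hγ) | ⟨γ', _, rfl⟩)
        · exact mono_mem.mpr ⟨γ, Or.inl hγ, le_refl _⟩
        · rw [Set.mem_singleton_iff] at hγ
          rw [hγ]
          exact mono_mem.mpr ⟨w, Or.inr rfl, le_add_right (le_refl _)⟩
        · exact mono_mem.mpr ⟨w, Or.inr rfl, le_add_right (le_refl _)⟩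
      · apply idealOf_le_of_forall
        rintro γ (hγ | hγ)
        · exact mono_mem.mpr ⟨γ, Or.inl (Or.inl hγ), le_refl _⟩
        · rw [Set.mem_singleton_iff] at hγ
          rw [hγ]
          refine mono_mem.mpr ⟨w + ((0 : Mon n) - w), Or.inr ⟨0, h0, rfl⟩, le_of_eq ?_⟩
          rw [zero_tsub, add_zero]
  | p :: L, Gt, hg, hsub, hfree, hLp => by
      obtain ⟨HC, htail⟩ := hg
      have hp := hLp p (List.mem_cons_self)
      have hfree' : ∀ γ ∈ insert p.1 Gt, γ j = 0 := by
        rintro γ (rfl | h)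
        · exact hp.1
        · exact hfree γ h
      have hIH := bottom_good j t ht w hw GK hGK L (insert p.1 Gt) htail
        (hsub.trans (Set.subset_insert _ _)) hfree'
        (fun q hq => hLp q (List.mem_cons_of_mem _ hq))
      have hsetins : bset j t w GK (insert p.1 Gt)
          = insert (w + (p.1 - w)) (bset j t w GK Gt) := by
        rw [bset, bset, Set.image_insert_eq, Set.union_insert]
      rw [hsetins] at hIH
      rw [bmap]
      split_ifs with hskip
      · rw [List.nil_append]
        obtain ⟨i, his, hne⟩ := hskip
        have h1 : mono K ((w - p.1) + p.1) ∈ idealOf K Gt := (HC (w - p.1)).mpr ⟨i, his, hne⟩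
        obtain ⟨γ, hγ, hle1⟩ := mono_mem.mp h1
        have hmem : mono K (w + (p.1 - w)) ∈ idealOf K (bset j t w GK Gt) := by
          refine mono_mem.mpr ⟨w + (γ - w), Or.inr ⟨γ, hγ, rfl⟩, ?_⟩
          rw [Finsupp.le_def]
          intro i'
          have h3 := Finsupp.le_def.mp hle1 i'
          simp only [Finsupp.add_apply, Finsupp.tsub_apply] at h3 ⊢
          omega
        exact good_congr _ _ _ _ (idealOf_insert_of_mem hmem) hIH
      · push_neg at hskip
      -- hskip : ∀ i ∈ p.2, (w - p.1) i = 0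
        have hblk := block_good j t ht w hw GK hGK Gt hfree hsub p.1
          (hLp p (List.mem_cons_self)).1 p.2 HC hskip t (le_refl t)
        have hbacct : bacc j t w GK Gt p.1 t = bset j t w GK Gt := by
          rw [bacc]
          ext μ
          simp only [Set.mem_union, Set.mem_image, Set.mem_setOf_eq]
          constructor
          · rintro (h | ⟨a', ⟨h1, h2⟩, rfl⟩)
            · exact h
            · omega
          · exact Or.inl
        rw [hbacct] at hblk
        exact good_append _ _ _ (insert (w + (p.1 - w)) (bset j t w GK Gt)) _ hblk hIH

end PC

namespace PC

variable {n : ℕ} {K : Type*} [Field K]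

theorem pairwise_bl (j : Fin n) (w vt : Mon n) (s : Set (Fin n)) :
    ∀ a, List.Pairwise Ord (bl j w vt s a)
  | 0 => by rw [bl]; exact List.Pairwise.nil
  | a+1 => by
      rw [bl]
      refine List.pairwise_cons.mpr ⟨?_, pairwise_bl j w vt s a⟩
      intro q hq _
      show (w + (vt - w) + Finsupp.single j a, insert j s).2 = q.2
      rw [bl_snd j w vt s a q hq]

theorem pairwise_bmap (j : Fin n) (t : ℕ) (w : Mon n) :
    ∀ (L : List (Step n)), (∀ p ∈ L, j ∉ p.2) → List.Pairwise Ord L →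
    List.Pairwise Ord (bmap j t w L)
  | [], _, _ => by rw [bmap]; exact List.Pairwise.nil
  | p :: L, hj, hpw => by
      rw [bmap]
      obtain ⟨hhead, htail⟩ := List.pairwise_cons.mp hpw
      rw [List.pairwise_append]
      refine ⟨?_, pairwise_bmap j t w L (fun q hq => hj q (List.mem_cons_of_mem _ hq))
        htail, ?_⟩
      · split_ifs
        · exact List.Pairwise.nil
        · exact pairwise_bl j w p.1 p.2 t
      · intro a ha b hb
        split_ifs at ha with hsk
        · simp at ha
        · have ha2 := bl_snd j w p.1 p.2 t a ha
          obtain ⟨p', hp', hb2⟩ := bmap_snd j t w L b hb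
          intro hsub
          rw [ha2, hb2] at hsub ⊢
          have hjp : j ∉ p.2 := hj p (List.mem_cons_self)
          have hjp' : j ∉ p'.2 := hj p' (List.mem_cons_of_mem _ hp')
          have hss : p.2 ⊆ p'.2 := by
            intro x hx
            rcases Set.mem_insert_iff.mp (hsub (Set.mem_insert_of_mem _ hx)) with h1 | h1
            · exact absurd (h1 ▸ hx) hjp
            · exact h1
          rw [hhead p' hp' hss]

end PC


/-- Let `I` have minimal monomial generating set `{u_1,…,u_{m-1}, ū_m x_j^t}`, where
`x_j` is a free variable of `I` dividing only the last generator and `x_j ∤ ū_m`.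
If the two minors `I_{(∅,{x_j})} = (u_1,…,u_{m-1}, ū_m)` and
`I_{({x_j},∅)} = (u_1,…,u_{m-1})` define pretty clean quotient rings, then `S/I` is
pretty clean. -/
theorem prettyClean_of_minors {n : ℕ} {K : Type*} [Field K] (m : ℕ) (hm : 0 < m)
    (g : Fin m → Mon n) (j : Fin n) (t : ℕ) (ht : 0 < t) (w : Mon n) (hw : w j = 0)
    (hlast : g ⟨m - 1, Nat.sub_lt hm Nat.one_pos⟩ = w + Finsupp.single j t)
    (hfree : ∀ i : Fin m, (i : ℕ) < m - 1 → g i j = 0)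
    (hmin : ∀ i i' : Fin m, g i ≤ g i' → i = i')
    (hJ : PrettyClean (idealOf K ({u | ∃ i : Fin m, (i : ℕ) < m - 1 ∧ u = g i} ∪ {w})))
    (hK : PrettyClean (idealOf K {u | ∃ i : Fin m, (i : ℕ) < m - 1 ∧ u = g i})) :
    PrettyClean (idealOf K (Set.range g)) := by
  classical
  set GK : Set (Mon n) := {u | ∃ i : Fin m, (i : ℕ) < m - 1 ∧ u = g i} with hGKdef
  have hGKfree : ∀ γ ∈ GK, γ j = 0 := by
    rintro γ ⟨i, hi, rfl⟩
    exact hfree i hi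
  have hGJfree : ∀ γ ∈ GK ∪ {w}, γ j = 0 := by
    rintro γ (h | h)
    · exact hGKfree γ h
    · rw [Set.mem_singleton_iff] at h
      rw [h]; exact hw
  obtain ⟨LK, hgK, hpwK⟩ := PC.extract_good GK hK
  have hepsK := PC.eps_good j LK GK hgK
  have himgK : PC.eps j '' GK = GK := by
    apply Set.Subset.antisymm
    · rintro _ ⟨γ, hγ, rfl⟩
      rw [PC.eps_of_free (hGKfree γ hγ)]
      exact hγ
    · intro γ hγ
      exact ⟨γ, hγ, PC.eps_of_free (hGKfree γ hγ)⟩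
  rw [himgK] at hepsK
  have hpropsK : ∀ p ∈ PC.emap j LK, p.1 j = 0 ∧ j ∉ p.2 := by
    intro p hp
    obtain ⟨q, hq, h2, h3⟩ := PC.emap_snd j LK p hp
    exact ⟨by rw [h3]; exact PC.eps_free j q.1, PC.emap_not_mem j LK p hp⟩
  have hbot := PC.bottom_good j t ht w hw GK hGKfree (PC.emap j LK) GK hepsK
    (Set.Subset.refl GK) hGKfree hpropsK
  obtain ⟨LJ, hgJ, hpwJ⟩ := PC.extract_good (GK ∪ {w}) hJ
  have hepsJ := PC.eps_good j LJ (GK ∪ {w}) hgJ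
  have himgJ : PC.eps j '' (GK ∪ {w}) = GK ∪ {w} := by
    apply Set.Subset.antisymm
    · rintro _ ⟨γ, hγ, rfl⟩
      rw [PC.eps_of_free (hGJfree γ hγ)]
      exact hγ
    · intro γ hγ
      exact ⟨γ, hγ, PC.eps_of_free (hGJfree γ hγ)⟩
  rw [himgJ] at hepsJ
  have hbig := PC.good_append _ _ _ (GK ∪ {w}) _ hbot hepsJ
  have hpwbot := PC.pairwise_bmap j t w (PC.emap j LK) (PC.emap_not_mem j LK)
    (PC.emap_pairwise j LK hpwK)
  have hpwtop := PC.emap_pairwise j LJ hpwJ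
  have hpwbig : List.Pairwise PC.Ord
      (PC.bmap j t w (PC.emap j LK) ++ PC.emap j LJ) := by
    rw [List.pairwise_append]
    refine ⟨hpwbot, hpwtop, ?_⟩
    intro a ha b hb
    intro hsub
    exfalso
    obtain ⟨p, hp, h2⟩ := PC.bmap_snd j t w _ a ha
    apply PC.emap_not_mem j LJ b hb
    apply hsub
    rw [h2]
    exact Set.mem_insert _ _
  have hpc := PC.good_prettyClean _ _ hbig hpwbig
  have hEQ : idealOf K (PC.bset j t w GK GK) = idealOf K (Set.range g) := by
    apply le_antisymm
    · apply PC.idealOf_le_of_forall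
      rintro γ ((hγ | hγ) | ⟨γ', hγ', rfl⟩)
      · obtain ⟨i, hi, rfl⟩ := hγ
        exact PC.mono_mem.mpr ⟨g i, Set.mem_range_self i, le_refl _⟩
      · rw [Set.mem_singleton_iff] at hγ
        rw [hγ]
        exact PC.mono_mem.mpr ⟨g ⟨m-1, Nat.sub_lt hm Nat.one_pos⟩, Set.mem_range_self _,
          le_of_eq hlast⟩
      · obtain ⟨i, hi, rfl⟩ := hγ'
        refine PC.mono_mem.mpr ⟨g i, Set.mem_range_self i, ?_⟩
        rw [Finsupp.le_def]
        intro i'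
        simp only [Finsupp.add_apply, Finsupp.tsub_apply]
        omega
    · apply PC.idealOf_le_of_forall
      rintro γ ⟨i, rfl⟩
      by_cases hi : (i : ℕ) < m - 1
      · exact PC.mono_mem.mpr ⟨g i, Or.inl (Or.inl ⟨i, hi, rfl⟩), le_refl _⟩
      · have hieq : (i : ℕ) = m - 1 := by have := i.isLt; omega
        have hgi : g i = w + Finsupp.single j t := by
          rw [← hlast]
          congr 1
          exact Fin.ext (by simp [hieq])
        rw [hgi]
        exact PC.mono_mem.mpr ⟨w + Finsupp.single j t, Or.inl (Or.inr rfl), le_refl _⟩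
  exact hEQ ▸ hpc
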